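/- arXiv:2405.17049 — 3 statements merged into one kernel-verified Lean document; each statement's English description precedes it below -/
import Mathlib

section
/- Let n ≥ 1 and w ∈ {-1,1}ⁿ. Consider the symmetric (n+2)×(n+2) block matrix M with rows/columns indexed by (1, x₁,…,xₙ, y): M(1,1) = 1, M(1, xⱼ) = wⱼ, M(1,y) = 0, M(xᵢ,xⱼ) = wᵢwⱼ, M(xⱼ, y) = 0, M(y,y) = 1. Then M is positive semidefinite, all diagonal entries indexed by variables equal 1, and the linear functional it defines assigns to f(x,y) = y − (2(⟨w,x⟩+b)/(n+b) − 1) the value −1, where ⟨w,x⟩-moments are read off the first row (i.e. L(y) = 0, L(xⱼ) = wⱼ, L(1) = 1 gives L(f) = 0 − 2(n+b)/(n+b) + 1 = −1 using Σⱼ wⱼ² = n). -/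
open Matrix

/-- Index type: the constant 1, the variables x₁,…,xₙ, and the variable y. -/
abbrev MomIdx (n : ℕ) := Unit ⊕ Fin n ⊕ Unit

/-- The first-order moment matrix from the proof of Theorem 1 (hardness of the
first-order relaxation), with rows/columns indexed by (1, x₁,…,xₙ, y). -/
def momentMatrix (n : ℕ) (w : Fin n → ℝ) : Matrix (MomIdx n) (MomIdx n) ℝ :=
  fun i j =>
    match i, j with
    | .inl _, .inl _ => 1
    | .inl _, .inr (.inl k) => w k
    | .inl _, .inr (.inr _) => 0
    | .inr (.inl k), .inl _ => w k
    | .inr (.inl k), .inr (.inl l) => w k * w l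
    | .inr (.inl _), .inr (.inr _) => 0
    | .inr (.inr _), .inl _ => 0
    | .inr (.inr _), .inr (.inl _) => 0
    | .inr (.inr _), .inr (.inr _) => 1

private lemma momentMatrix_posSemidef (n : ℕ) (w : Fin n → ℝ) :
    (momentMatrix n w).PosSemidef := by
  rw [Matrix.posSemidef_iff_dotProduct_mulVec]
  constructor
  · ext i j
    rcases i with _ | (k | _) <;> rcases j with _ | (l | _) <;>
      simp [momentMatrix, Matrix.conjTranspose, mul_comm]
  · intro x
    set a := x (.inl ()) with ha
    set y := x (.inr (.inr ())) with hy
    set S := ∑ k, w k * x (.inr (.inl k)) with hS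
    have key : (star x) ⬝ᵥ (momentMatrix n w).mulVec x = (a + S)^2 + y^2 := by
      simp only [dotProduct, mulVec, Fintype.sum_sum_type, Finset.univ_unique,
        Finset.sum_singleton, momentMatrix, star, Pi.star_apply, star_trivial]
      have h1 : ∀ k : Fin n, x (.inr (.inl k)) *
          (w k * x (.inl ()) + ∑ l, w k * w l * x (.inr (.inl l)))
          = w k * x (.inr (.inl k)) * (a + S) := by
        intro k
        have : ∑ l, w k * w l * x (.inr (.inl l)) = w k * S := by
          rw [hS, Finset.mul_sum]; simp [mul_assoc]
        rw [this, ha]; ring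
      simp only [zero_mul, one_mul, mul_zero, add_zero, Finset.sum_const_zero, id_eq]
      simp only [h1]
      simp only [h1, ← Finset.sum_mul, ← hS, ← ha, ← hy]
      ring
    rw [key]; positivity

/-- the moment matrix is PSD, its variable-diagonal entries are 1,
and the linear functional it defines assigns value −1 to
f(x,y) = y − (2(⟨w,x⟩+b)/(n+b) − 1). -/
theorem moment_matrix_feasible_value (n : ℕ) (hn : 1 ≤ n) (w : Fin n → ℝ)
    (hw : ∀ k, w k = 1 ∨ w k = -1) (b : ℝ) (hb : |b| < n) :
    (momentMatrix n w).PosSemidef ∧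
    (∀ k : Fin n,
      momentMatrix n w (.inr (.inl k)) (.inr (.inl k)) = 1) ∧
    momentMatrix n w (.inr (.inr ())) (.inr (.inr ())) = 1 ∧
    (momentMatrix n w (.inl ()) (.inr (.inr ())) -
      (2 * ((∑ k, w k * momentMatrix n w (.inl ()) (.inr (.inl k))) + b) /
          ((n : ℝ) + b) - 1)) = -1 := by
  refine ⟨momentMatrix_posSemidef n w, fun k => ?_, rfl, ?_⟩
  · rcases hw k with h | h <;> simp [momentMatrix, h]
  · have hsum : ∑ k, w k * momentMatrix n w (.inl ()) (.inr (.inl k)) = (n : ℝ) := by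
      have : ∀ k : Fin n, w k * momentMatrix n w (.inl ()) (.inr (.inl k)) = 1 := by
        intro k; rcases hw k with h | h <;> simp [momentMatrix, h]
      simp [this]
    rw [hsum]
    have hnb : (n : ℝ) + b ≠ 0 := by
      have := abs_lt.mp hb
      nlinarith [this.1, this.2]
    have hM : momentMatrix n w (.inl ()) (.inr (.inr ())) = 0 := rfl
    rw [hM]
    field_simp
    norm_num
end

section
/- Let n ≥ 1, w ∈ {-1,1}ⁿ, b ∈ ℝ with |b| < n, x ∈ ℝⁿ, y ∈ ℝ. If y² = 1, xₖ² = 1 for all k, y(⟨w,x⟩+b) ≥ 0, and (y+1)(n − ⟨w,x⟩) ≥ 0 and (1−y)(n + ⟨w,x⟩) ≥ 0, then both LP constraints hold: (n+b)(y+1) ≥ 2(⟨w,x⟩+b) and (n−b)(1−y) ≥ −2(⟨w,x⟩+b). -/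
/-- the refined quadratic constraints together with the
tautologies imply both LP constraints. -/
theorem refined_implies_lp (n : ℕ) (hn : 1 ≤ n) (w : Fin n → ℝ)
    (hw : ∀ k, w k = 1 ∨ w k = -1) (b : ℝ) (hb : |b| < n)
    (x : Fin n → ℝ) (hx : ∀ k, (x k) ^ 2 = 1) (y : ℝ) (hy : y ^ 2 = 1)
    (hsign : y * ((∑ k, w k * x k) + b) ≥ 0)
    (ht1 : (y + 1) * ((n : ℝ) - ∑ k, w k * x k) ≥ 0)
    (ht2 : (1 - y) * ((n : ℝ) + ∑ k, w k * x k) ≥ 0) :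
    ((n : ℝ) + b) * (y + 1) ≥ 2 * ((∑ k, w k * x k) + b) ∧
    ((n : ℝ) - b) * (1 - y) ≥ -(2 * ((∑ k, w k * x k) + b)) := by
  have h : (y - 1) * (y + 1) = 0 := by nlinarith
  rcases mul_eq_zero.1 h with h1 | h1
  · have hy1 : y = 1 := by linarith
    subst hy1
    constructor <;> nlinarith
  · have hy1 : y = -1 := by linarith
    subst hy1
    constructor <;> nlinarith
end

section
/- In the toy BNN certificate: for real variables x₁₁, x₁₂, x₂₂ satisfying x₁₁² = 1, x₁₂² = 1, x₂₂² = 1, the polynomial identity (2x₂₂ − 1) + 4 = (3/10)·[(2/3)(x₂₂−1)(x₁₂−x₁₁−1/2) + (2/3)(1+x₂₂)(2−x₁₂+x₁₁)] + (2/5)·(1/2)(1−x₁₁)² + (2/5)·(1/2)(1+x₁₂)² + (17/10)·(1/2)(1+x₂₂)² holds. Consequently, if additionally (x₂₂−1)(x₁₂−x₁₁−1/2) ≥ 0 and (1+x₂₂)(2−x₁₂+x₁₁) ≥ 0, then 2x₂₂ − 1 ≥ −4. -/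
/-- explicit SOS certificate for the toy BNN, certifying the
lower bound −4 on the adversarial objective 2x₂₂ − 1. -/
theorem toy_bnn_sos_certificate (x11 x12 x22 : ℝ)
    (h11 : x11 ^ 2 = 1) (h12 : x12 ^ 2 = 1) (h22 : x22 ^ 2 = 1) :
    ((2 * x22 - 1) + 4 =
      (3 / 10) * ((2 / 3) * ((x22 - 1) * (x12 - x11 - 1 / 2)) +
          (2 / 3) * ((1 + x22) * (2 - x12 + x11))) +
        (2 / 5) * ((1 / 2) * (1 - x11) ^ 2) +
        (2 / 5) * ((1 / 2) * (1 + x12) ^ 2) +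
        (17 / 10) * ((1 / 2) * (1 + x22) ^ 2)) ∧
    ((x22 - 1) * (x12 - x11 - 1 / 2) ≥ 0 →
      (1 + x22) * (2 - x12 + x11) ≥ 0 →
      2 * x22 - 1 ≥ -4) := by
  constructor
  · nlinarith [h11, h12, h22, sq_nonneg x11]
  · intro hA hB
    nlinarith [sq_nonneg (1 - x11), sq_nonneg (1 + x12), sq_nonneg (1 + x22)]
end
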